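/- The 2-dimensional Lebesgue measure of the set of pairs (s,t) in the unit square [0,1]² for which the three lengths min(s,t), |s-t| and 1-max(s,t) are the side lengths of an acute triangle (i.e. the square of each length is strictly less than the sum of the squares of the other two) equals 3·ln 2 − 2. -/

import Mathlib

open MeasureTheory Set

/-! Auxiliary slice-volume lemmas -/

lemma vol_slice_fst {A : Set (ℝ × ℝ)} (hA : MeasurableSet A) {s : Set ℝ} (hs : MeasurableSet s)
    {h : ℝ → ℝ} (h0 : ∀ x ∈ s, 0 ≤ h x) (hint : IntegrableOn h s)
    (hsl : ∀ x, volume {y | (x, y) ∈ A} =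
      Set.indicator s (fun x => ENNReal.ofReal (h x)) x) :
    volume A = ENNReal.ofReal (∫ x in s, h x) := by
  rw [MeasureTheory.Measure.volume_eq_prod, Measure.prod_apply hA]
  have : ∫⁻ x, volume (Prod.mk x ⁻¹' A) =
      ∫⁻ x, Set.indicator s (fun x => ENNReal.ofReal (h x)) x :=
    lintegral_congr fun x => hsl x
  rw [this, lintegral_indicator hs _,
    ← ofReal_integral_eq_lintegral_ofReal hint ((ae_restrict_iff' hs).2 (ae_of_all _ h0))]

lemma vol_slice_snd {A : Set (ℝ × ℝ)} (hA : MeasurableSet A) {s : Set ℝ} (hs : MeasurableSet s)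
    {h : ℝ → ℝ} (h0 : ∀ x ∈ s, 0 ≤ h x) (hint : IntegrableOn h s)
    (hsl : ∀ y, volume {x | (x, y) ∈ A} =
      Set.indicator s (fun y => ENNReal.ofReal (h y)) y) :
    volume A = ENNReal.ofReal (∫ x in s, h x) := by
  rw [MeasureTheory.Measure.volume_eq_prod, Measure.prod_apply_symm hA]
  have : ∫⁻ y, volume ((fun x => (x, y)) ⁻¹' A) =
      ∫⁻ y, Set.indicator s (fun y => ENNReal.ofReal (h y)) y :=
    lintegral_congr fun y => hsl y
  rw [this, lintegral_indicator hs _,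
    ← ofReal_integral_eq_lintegral_ofReal hint ((ae_restrict_iff' hs).2 (ae_of_all _ h0))]

/-! The key 1-dimensional integral -/

lemma key_int : ∫ x in Ioo (0:ℝ) (1/2), (x + 1/2 - 2⁻¹ * (1 - x)⁻¹) =
    3/8 - Real.log 2 / 2 := by
  rw [← MeasureTheory.integral_Ioc_eq_integral_Ioo,
    ← intervalIntegral.integral_of_le (by norm_num : (0:ℝ) ≤ 1/2)]
  have h1 : IntervalIntegrable (fun x : ℝ => x + 1/2) volume 0 (1/2) := by
    apply Continuous.intervalIntegrable; continuity
  have h2 : IntervalIntegrable (fun x : ℝ => 2⁻¹ * (1 - x)⁻¹) volume 0 (1/2) := by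
    apply ContinuousOn.intervalIntegrable
    apply ContinuousOn.mul continuousOn_const
    apply ContinuousOn.inv₀ (by fun_prop)
    intro x hx
    rw [Set.uIcc_of_le (by norm_num : (0:ℝ) ≤ 1/2)] at hx
    have := hx.2; intro hc; nlinarith [hx.1]
  rw [intervalIntegral.integral_sub h1 h2,
    intervalIntegral.integral_add (by apply Continuous.intervalIntegrable; continuity)
      (intervalIntegrable_const), intervalIntegral.integral_const_mul]
  have h3 : (∫ x in (0:ℝ)..(1/2), (1 - x)⁻¹) = Real.log 2 := by
    have := intervalIntegral.integral_comp_sub_left (a := (0:ℝ)) (b := 1/2)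
      (fun x : ℝ => x⁻¹) 1
    try simp only at this
    rw [this]
    rw [show (1:ℝ) - 1/2 = 1/2 by norm_num, show (1:ℝ) - 0 = 1 by norm_num]
    rw [integral_inv (by rw [Set.uIcc_of_le (by norm_num : (1:ℝ)/2 ≤ 1)]; intro hc; exact absurd hc.1 (by norm_num))]
    norm_num
  rw [h3, integral_id, intervalIntegral.integral_const]
  norm_num
  ring

lemma id_int : ∫ x in Ioo (0:ℝ) (1/2), x = 1/8 := by
  rw [← MeasureTheory.integral_Ioc_eq_integral_Ioo,
    ← intervalIntegral.integral_of_le (by norm_num : (0:ℝ) ≤ 1/2), integral_id]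
  norm_num

/-! The sets -/

noncomputable def bsU (v : ℝ) : ℝ := (2*v^2 - 2*v + 1)/(2*(1-v))
noncomputable def bsL (v : ℝ) : ℝ := (1 - 2*v)/(2*(1-v))

def bsTri : Set (ℝ × ℝ) := {p | p.1 < 1/2 ∧ p.2 < 1/2 ∧ 1/2 < p.1 + p.2}
def bsAc : Set (ℝ × ℝ) := {p | p.1^2 + p.2^2 > (1 - p.1 - p.2)^2 ∧
    p.2^2 + (1 - p.1 - p.2)^2 > p.1^2 ∧ p.1^2 + (1 - p.1 - p.2)^2 > p.2^2}
def bsNa : Set (ℝ × ℝ) := {p | p.2 ∈ Ioo (0:ℝ) (1/2) ∧ p.1 ∈ Ico (bsU p.2) (1/2)}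
def bsNb : Set (ℝ × ℝ) := {p | p.1 ∈ Ioo (0:ℝ) (1/2) ∧ p.2 ∈ Ico (bsU p.1) (1/2)}
def bsNc : Set (ℝ × ℝ) := {p | p.2 ∈ Ioo (0:ℝ) (1/2) ∧ p.1 ∈ Ioc (1/2 - p.2) (bsL p.2)}

lemma bsU_meas : Measurable bsU := by unfold bsU; fun_prop
lemma bsL_meas : Measurable bsL := by unfold bsL; fun_prop

lemma bsTri_meas : MeasurableSet bsTri := by
  unfold bsTri
  apply MeasurableSet.inter (measurableSet_lt measurable_fst measurable_const)
  exact (measurableSet_lt measurable_snd measurable_const).inter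
    (measurableSet_lt measurable_const (measurable_fst.add measurable_snd))

lemma bsAc_meas : MeasurableSet bsAc := by
  unfold bsAc
  simp only [Set.setOf_and]
  refine MeasurableSet.inter ?_ (MeasurableSet.inter ?_ ?_)
  · exact measurableSet_lt (f := fun p : ℝ × ℝ => (1 - p.1 - p.2)^2)
      (g := fun p : ℝ × ℝ => p.1^2 + p.2^2) (by fun_prop) (by fun_prop)
  · exact measurableSet_lt (f := fun p : ℝ × ℝ => p.1^2)
      (g := fun p : ℝ × ℝ => p.2^2 + (1 - p.1 - p.2)^2) (by fun_prop) (by fun_prop)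
  · exact measurableSet_lt (f := fun p : ℝ × ℝ => p.2^2)
      (g := fun p : ℝ × ℝ => p.1^2 + (1 - p.1 - p.2)^2) (by fun_prop) (by fun_prop)

lemma bsNa_meas : MeasurableSet bsNa := by
  unfold bsNa
  refine MeasurableSet.inter (measurable_snd measurableSet_Ioo) ?_
  exact (measurableSet_le (bsU_meas.comp measurable_snd) measurable_fst).inter
    (measurableSet_lt measurable_fst measurable_const)

lemma bsNb_meas : MeasurableSet bsNb := by
  unfold bsNb
  refine MeasurableSet.inter (measurable_fst measurableSet_Ioo) ?_
  exact (measurableSet_le (bsU_meas.comp measurable_fst) measurable_snd).inter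
    (measurableSet_lt measurable_snd measurable_const)

lemma bsNc_meas : MeasurableSet bsNc := by
  unfold bsNc
  refine MeasurableSet.inter (measurable_snd measurableSet_Ioo) ?_
  exact (measurableSet_lt (measurable_const.sub measurable_snd) measurable_fst).inter
    (measurableSet_le measurable_fst (bsL_meas.comp measurable_snd))

/-! polynomial characterizations of membership -/

lemma bsNa_mem {u v : ℝ} :
    (u, v) ∈ bsNa ↔ (0 < v ∧ v < 1/2) ∧ 2*v^2 - 2*v + 1 ≤ 2*u*(1-v) ∧ u < 1/2 := by
  unfold bsNa bsU
  simp only [mem_setOf_eq, mem_Ioo, mem_Ico]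
  constructor
  · rintro ⟨⟨hv0, hv⟩, hU, hu⟩
    refine ⟨⟨hv0, hv⟩, ?_, hu⟩
    rw [div_le_iff₀ (by linarith)] at hU
    nlinarith
  · rintro ⟨⟨hv0, hv⟩, hU, hu⟩
    refine ⟨⟨hv0, hv⟩, ?_, hu⟩
    rw [div_le_iff₀ (by linarith)]
    nlinarith

lemma bsNb_mem {u v : ℝ} :
    (u, v) ∈ bsNb ↔ (0 < u ∧ u < 1/2) ∧ 2*u^2 - 2*u + 1 ≤ 2*v*(1-u) ∧ v < 1/2 := by
  unfold bsNb bsU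
  simp only [mem_setOf_eq, mem_Ioo, mem_Ico]
  constructor
  · rintro ⟨⟨hu0, hu⟩, hU, hv⟩
    refine ⟨⟨hu0, hu⟩, ?_, hv⟩
    rw [div_le_iff₀ (by linarith)] at hU
    nlinarith
  · rintro ⟨⟨hu0, hu⟩, hU, hv⟩
    refine ⟨⟨hu0, hu⟩, ?_, hv⟩
    rw [div_le_iff₀ (by linarith)]
    nlinarith

lemma bsNc_mem {u v : ℝ} :
    (u, v) ∈ bsNc ↔ (0 < v ∧ v < 1/2) ∧ 1/2 - v < u ∧ 2*u*(1-v) ≤ 1 - 2*v := by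
  unfold bsNc bsL
  simp only [mem_setOf_eq, mem_Ioo, mem_Ioc]
  constructor
  · rintro ⟨⟨hv0, hv⟩, hlo, hL⟩
    refine ⟨⟨hv0, hv⟩, hlo, ?_⟩
    rw [le_div_iff₀ (by linarith)] at hL
    nlinarith
  · rintro ⟨⟨hv0, hv⟩, hlo, hL⟩
    refine ⟨⟨hv0, hv⟩, hlo, ?_⟩
    rw [le_div_iff₀ (by linarith)]
    nlinarith

/-! Volumes of the three "non-acute" regions -/

lemma bsU_cont : ContinuousOn bsU (Icc 0 (1/2)) := by
  unfold bsU
  apply ContinuousOn.div (by fun_prop) (by fun_prop)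
  intro x hx h
  nlinarith [hx.1, hx.2]

lemma bsU_le {x : ℝ} (hx : x ∈ Ioo (0:ℝ) (1/2)) : 0 ≤ 1/2 - bsU x := by
  rw [sub_nonneg]
  unfold bsU
  rw [div_le_iff₀ (by nlinarith [hx.2])]
  nlinarith [hx.1, hx.2]

lemma bsU_intOn : IntegrableOn (fun x => 1/2 - bsU x) (Ioo (0:ℝ) (1/2)) :=
  ((continuousOn_const.sub bsU_cont).integrableOn_Icc).mono_set Ioo_subset_Icc_self

lemma bsU_integral : ∫ x in Ioo (0:ℝ) (1/2), (1/2 - bsU x) = 3/8 - Real.log 2 / 2 := by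
  rw [← key_int]
  apply setIntegral_congr_fun measurableSet_Ioo
  intro x hx
  have h1 : (1:ℝ) - x ≠ 0 := by intro h; nlinarith [hx.2]
  unfold bsU
  field_simp
  ring

lemma vol_bsNa : volume bsNa = ENNReal.ofReal (3/8 - Real.log 2 / 2) := by
  rw [vol_slice_snd bsNa_meas measurableSet_Ioo (fun x hx => bsU_le hx) bsU_intOn ?_,
    bsU_integral]
  intro y
  by_cases hy : y ∈ Ioo (0:ℝ) (1/2)
  · rw [Set.indicator_of_mem hy]
    have he : {x | (x, y) ∈ bsNa} = Ico (bsU y) (1/2) :=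
      Set.ext fun x => ⟨fun hx => hx.2, fun hx => ⟨hy, hx⟩⟩
    rw [he, Real.volume_Ico]
  · rw [Set.indicator_of_notMem hy]
    have he : {x | (x, y) ∈ bsNa} = ∅ :=
      eq_empty_of_forall_notMem fun x hx => hy hx.1
    rw [he, measure_empty]

lemma vol_bsNb : volume bsNb = ENNReal.ofReal (3/8 - Real.log 2 / 2) := by
  rw [vol_slice_fst bsNb_meas measurableSet_Ioo (fun x hx => bsU_le hx) bsU_intOn ?_,
    bsU_integral]
  intro x
  by_cases hx : x ∈ Ioo (0:ℝ) (1/2)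
  · rw [Set.indicator_of_mem hx]
    have he : {y | (x, y) ∈ bsNb} = Ico (bsU x) (1/2) :=
      Set.ext fun y => ⟨fun hy => hy.2, fun hy => ⟨hx, hy⟩⟩
    rw [he, Real.volume_Ico]
  · rw [Set.indicator_of_notMem hx]
    have he : {y | (x, y) ∈ bsNb} = ∅ :=
      eq_empty_of_forall_notMem fun y hy => hx hy.1
    rw [he, measure_empty]

lemma bsL_cont : ContinuousOn (fun y => bsL y - (1/2 - y)) (Icc 0 (1/2)) := by
  apply ContinuousOn.sub ?_ (by fun_prop)
  unfold bsL
  apply ContinuousOn.div (by fun_prop) (by fun_prop)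
  intro x hx h
  nlinarith [hx.1, hx.2]

lemma bsL_le {y : ℝ} (hy : y ∈ Ioo (0:ℝ) (1/2)) : 0 ≤ bsL y - (1/2 - y) := by
  rw [sub_nonneg]
  unfold bsL
  rw [le_div_iff₀ (by nlinarith [hy.2])]
  nlinarith [hy.1, hy.2]

lemma bsL_intOn : IntegrableOn (fun y => bsL y - (1/2 - y)) (Ioo (0:ℝ) (1/2)) :=
  (bsL_cont.integrableOn_Icc).mono_set Ioo_subset_Icc_self

lemma bsL_integral : ∫ y in Ioo (0:ℝ) (1/2), (bsL y - (1/2 - y)) = 3/8 - Real.log 2 / 2 := by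
  rw [← key_int]
  apply setIntegral_congr_fun measurableSet_Ioo
  intro x hx
  have h1 : (1:ℝ) - x ≠ 0 := by intro h; nlinarith [hx.2]
  unfold bsL
  field_simp
  ring

lemma vol_bsNc : volume bsNc = ENNReal.ofReal (3/8 - Real.log 2 / 2) := by
  rw [vol_slice_snd bsNc_meas measurableSet_Ioo (fun y hy => bsL_le hy) bsL_intOn ?_,
    bsL_integral]
  intro y
  by_cases hy : y ∈ Ioo (0:ℝ) (1/2)
  · rw [Set.indicator_of_mem hy]
    have he : {x | (x, y) ∈ bsNc} = Ioc (1/2 - y) (bsL y) :=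
      Set.ext fun x => ⟨fun hx => hx.2, fun hx => ⟨hy, hx⟩⟩
    rw [he, Real.volume_Ioc]
  · rw [Set.indicator_of_notMem hy]
    have he : {x | (x, y) ∈ bsNc} = ∅ :=
      eq_empty_of_forall_notMem fun x hx => hy hx.1
    rw [he, measure_empty]

/-! Volume of the triangle-inequality region -/

lemma vol_bsTri : volume bsTri = ENNReal.ofReal (1/8) := by
  rw [show (1:ℝ)/8 = ∫ x in Ioo (0:ℝ) (1/2), x from id_int.symm]
  apply vol_slice_fst bsTri_meas measurableSet_Ioo (fun x hx => hx.1.le)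
    ((continuousOn_id.integrableOn_Icc).mono_set Ioo_subset_Icc_self)
  intro x
  by_cases hx : x ∈ Ioo (0:ℝ) (1/2)
  · rw [Set.indicator_of_mem hx]
    have he : {y | (x, y) ∈ bsTri} = Ioo (1/2 - x) (1/2) := by
      ext y
      exact ⟨fun h => ⟨by linarith [h.2.2], h.2.1⟩, fun h => ⟨hx.2, h.2, by linarith [h.1]⟩⟩
    rw [he, Real.volume_Ioo]
    congr 1
    ring
  · rw [Set.indicator_of_notMem hx]
    have he : {y | (x, y) ∈ bsTri} = ∅ := by
      apply eq_empty_of_forall_notMem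
      rintro y ⟨h1, h2, h3⟩
      simp only [mem_Ioo, not_and_or, not_lt] at hx
      rcases hx with h | h <;> linarith
    rw [he, measure_empty]

/-! Decomposition of the triangle region -/

lemma bs_split : bsTri \ bsAc = bsNa ∪ bsNb ∪ bsNc := by
  ext ⟨u, v⟩
  simp only [mem_diff, mem_union, bsNa_mem, bsNb_mem, bsNc_mem]
  simp only [bsTri, bsAc, mem_setOf_eq, not_and_or, not_lt]
  constructor
  · rintro ⟨⟨hu, hv, huv⟩, hob⟩
    rcases hob with h | h | h
    · exact Or.inr ⟨⟨by linarith, hv⟩, by linarith, by nlinarith⟩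
    · exact Or.inl (Or.inl ⟨⟨by linarith, hv⟩, by nlinarith, hu⟩)
    · exact Or.inl (Or.inr ⟨⟨by linarith, hu⟩, by nlinarith, hv⟩)
  · rintro ((⟨⟨hv0, hv⟩, hP, hu⟩ | ⟨⟨hu0, hu⟩, hP, hv⟩) | ⟨⟨hv0, hv⟩, hlo, hP⟩)
    · exact ⟨⟨hu, hv, by nlinarith⟩, Or.inr (Or.inl (by nlinarith))⟩
    · exact ⟨⟨hu, hv, by nlinarith⟩, Or.inr (Or.inr (by nlinarith))⟩
    · exact ⟨⟨by nlinarith, hv, by linarith⟩, Or.inl (by nlinarith)⟩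

lemma dis_ab : Disjoint bsNa bsNb := by
  rw [Set.disjoint_left]
  rintro ⟨u, v⟩ ha hb
  rw [bsNa_mem] at ha
  rw [bsNb_mem] at hb
  obtain ⟨⟨hv0, hv⟩, ha2, hu⟩ := ha
  obtain ⟨⟨hu0, _⟩, hb2, _⟩ := hb
  nlinarith [mul_pos (show (0:ℝ) < 1 - u - v by linarith) (show (0:ℝ) < 1 - u - v by linarith)]

lemma dis_ac : Disjoint bsNa bsNc := by
  rw [Set.disjoint_left]
  rintro ⟨u, v⟩ ha hc
  rw [bsNa_mem] at ha
  rw [bsNc_mem] at hc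
  obtain ⟨⟨hv0, hv⟩, ha2, hu⟩ := ha
  obtain ⟨_, _, hc2⟩ := hc
  nlinarith [mul_pos hv0 hv0]

lemma dis_bc : Disjoint bsNb bsNc := by
  rw [Set.disjoint_left]
  rintro ⟨u, v⟩ hb hc
  rw [bsNb_mem] at hb
  rw [bsNc_mem] at hc
  obtain ⟨⟨hu0, hu⟩, hb2, hv⟩ := hb
  obtain ⟨_, _, hc2⟩ := hc
  nlinarith [mul_pos hu0 hu0]

lemma vol_T : volume (bsTri ∩ bsAc) = ENNReal.ofReal (3/2 * Real.log 2 - 1) := by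
  have ha : (0:ℝ) ≤ 3/8 - Real.log 2 / 2 := by
    nlinarith [Real.log_two_lt_d9]
  have hdiff : volume (bsTri \ bsAc) = ENNReal.ofReal (9/8 - 3/2 * Real.log 2) := by
    rw [bs_split, measure_union (Set.disjoint_union_left.mpr ⟨dis_ac, dis_bc⟩) bsNc_meas,
      measure_union dis_ab bsNb_meas, vol_bsNa, vol_bsNb, vol_bsNc,
      ← ENNReal.ofReal_add ha ha, ← ENNReal.ofReal_add (by linarith) ha]
    congr 1
    ring
  have h0 := measure_inter_add_diff (μ := volume) bsTri bsAc_meas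
  rw [hdiff, vol_bsTri] at h0
  have h9 : (0:ℝ) ≤ 9/8 - 3/2 * Real.log 2 := by nlinarith [Real.log_two_lt_d9]
  rw [ENNReal.eq_sub_of_add_eq ENNReal.ofReal_ne_top h0,
    ← ENNReal.ofReal_sub _ h9]
  congr 1
  ring

/-! The broken-stick set -/

def bsS : Set (ℝ × ℝ) := {p | p.1 ∈ Set.Icc (0:ℝ) 1 ∧ p.2 ∈ Set.Icc (0:ℝ) 1 ∧
      min p.1 p.2 ^ 2 + |p.1 - p.2| ^ 2 > (1 - max p.1 p.2) ^ 2 ∧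
      |p.1 - p.2| ^ 2 + (1 - max p.1 p.2) ^ 2 > min p.1 p.2 ^ 2 ∧
      min p.1 p.2 ^ 2 + (1 - max p.1 p.2) ^ 2 > |p.1 - p.2| ^ 2}

lemma bsS_meas : MeasurableSet bsS := by
  have hmin : Measurable fun p : ℝ × ℝ => min p.1 p.2 ^ 2 :=
    (measurable_fst.min measurable_snd).pow_const 2
  have habs : Measurable fun p : ℝ × ℝ => |p.1 - p.2| ^ 2 :=
    (measurable_fst.sub measurable_snd).abs.pow_const 2
  have hmax : Measurable fun p : ℝ × ℝ => (1 - max p.1 p.2) ^ 2 :=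
    (measurable_const.sub (measurable_fst.max measurable_snd)).pow_const 2
  unfold bsS
  simp only [Set.setOf_and]
  refine MeasurableSet.inter (measurable_fst measurableSet_Icc)
    (MeasurableSet.inter (measurable_snd measurableSet_Icc)
      (MeasurableSet.inter ?_ (MeasurableSet.inter ?_ ?_)))
  · exact measurableSet_lt hmax (hmin.add habs)
  · exact measurableSet_lt hmin (habs.add hmax)
  · exact measurableSet_lt habs (hmin.add hmax)

lemma bsS_swap {u v : ℝ} : (v, u) ∈ bsS ↔ (u, v) ∈ bsS := by
  unfold bsS
  simp only [mem_setOf_eq]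
  rw [min_comm v u, max_comm v u, abs_sub_comm v u]
  tauto

lemma swap_eq : Prod.swap ⁻¹' (bsS ∩ {p | p.1 < p.2}) = bsS ∩ {p | p.2 < p.1} := by
  ext ⟨u, v⟩
  simp only [mem_preimage, Prod.swap_prod_mk, mem_inter_iff, mem_setOf_eq]
  exact and_congr_left' bsS_swap

lemma S_union : bsS = (bsS ∩ {p | p.1 < p.2}) ∪ (bsS ∩ {p | p.2 < p.1}) := by
  ext ⟨u, v⟩
  constructor
  · intro h
    rcases lt_trichotomy u v with hlt | heq | hgt
    · exact Or.inl ⟨h, hlt⟩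
    · exfalso
      subst heq
      obtain ⟨_, _, h1, h2, _⟩ := h
      simp only [min_self, max_self, sub_self, abs_zero] at h1 h2
      norm_num at h1 h2
      linarith
    · exact Or.inr ⟨h, hgt⟩
  · rintro (⟨h, _⟩ | ⟨h, _⟩) <;> exact h

lemma phi_pre : (fun z : ℝ × ℝ => (z.1, z.1 + z.2)) ⁻¹' (bsS ∩ {p | p.1 < p.2}) =
    bsTri ∩ bsAc := by
  ext ⟨u, v⟩
  simp only [mem_preimage, mem_inter_iff, mem_setOf_eq]
  unfold bsS bsTri bsAc
  simp only [mem_setOf_eq, mem_Icc]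
  constructor
  · rintro ⟨⟨⟨hu0, hu1⟩, ⟨hw0, hw1⟩, h1, h2, h3⟩, hlt⟩
    have hv : 0 < v := by linarith
    rw [min_eq_left (by linarith), max_eq_right (by linarith),
      show |u - (u + v)| = v by
        rw [abs_sub_comm, show u + v - u = v by ring, abs_of_pos hv],
      show (1:ℝ) - (u + v) = 1 - u - v by ring] at h1 h2 h3
    have hc0 : (0:ℝ) ≤ 1 - u - v := by linarith
    refine ⟨⟨?_, ?_, ?_⟩, h1, h2, h3⟩
    · nlinarith [mul_nonneg hv.le hc0]
    · nlinarith [mul_nonneg hu0 hc0]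
    · nlinarith [mul_nonneg hu0 hv.le]
  · rintro ⟨⟨hu, hv, huv⟩, h1, h2, h3⟩
    have hu0 : 0 < u := by linarith
    have hv0 : 0 < v := by linarith
    refine ⟨⟨⟨by linarith, by linarith⟩, ⟨by linarith, by linarith⟩, ?_, ?_, ?_⟩, by linarith⟩
    all_goals rw [min_eq_left (by linarith), max_eq_right (by linarith),
      show |u - (u + v)| = v by
        rw [abs_sub_comm, show u + v - u = v by ring, abs_of_pos hv0],
      show (1:ℝ) - (u + v) = 1 - u - v by ring]
    exacts [h1, h2, h3]

theorem broken_stick_acute_triangle_prob :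
    volume {p : ℝ × ℝ | p.1 ∈ Set.Icc (0:ℝ) 1 ∧ p.2 ∈ Set.Icc (0:ℝ) 1 ∧
      min p.1 p.2 ^ 2 + |p.1 - p.2| ^ 2 > (1 - max p.1 p.2) ^ 2 ∧
      |p.1 - p.2| ^ 2 + (1 - max p.1 p.2) ^ 2 > min p.1 p.2 ^ 2 ∧
      min p.1 p.2 ^ 2 + (1 - max p.1 p.2) ^ 2 > |p.1 - p.2| ^ 2} =
    ENNReal.ofReal (3 * Real.log 2 - 2) := by
  show volume bsS = _
  have hm1 : MeasurableSet (bsS ∩ {p | p.1 < p.2}) :=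
    bsS_meas.inter (measurableSet_lt measurable_fst measurable_snd)
  have hm2 : MeasurableSet (bsS ∩ {p | p.2 < p.1}) :=
    bsS_meas.inter (measurableSet_lt measurable_snd measurable_fst)
  have hv1 : volume (bsS ∩ {p | p.1 < p.2}) = ENNReal.ofReal (3/2 * Real.log 2 - 1) := by
    have hmp : MeasurePreserving (fun z : ℝ × ℝ => (z.1, z.1 + z.2)) volume volume := by
      rw [MeasureTheory.Measure.volume_eq_prod]
      exact measurePreserving_prod_add volume volume
    rw [← hmp.measure_preimage hm1.nullMeasurableSet, phi_pre, vol_T]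
  have hv2 : volume (bsS ∩ {p | p.2 < p.1}) = ENNReal.ofReal (3/2 * Real.log 2 - 1) := by
    have hswap : MeasurePreserving (Prod.swap : ℝ × ℝ → ℝ × ℝ) volume volume := by
      rw [MeasureTheory.Measure.volume_eq_prod]
      exact Measure.measurePreserving_swap
    rw [← swap_eq, hswap.measure_preimage hm1.nullMeasurableSet, hv1]
  have hpos : (0:ℝ) ≤ 3/2 * Real.log 2 - 1 := by nlinarith [Real.log_two_gt_d9]
  rw [S_union, measure_union (by
      rw [Set.disjoint_left]
      rintro ⟨a, b⟩ hp hq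
      have h1 : a < b := hp.2
      have h2 : b < a := hq.2
      exact absurd h2 (not_lt.mpr h1.le)) hm2,
    hv1, hv2, ← ENNReal.ofReal_add hpos hpos]
  congr 1
  ring
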